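/- Let K, H be compact subsets of ℂ with ∂K ⊆ H ⊆ K. If H is countable, then H = K, and in particular K is countable. -/

import Mathlib

/-- If `K, H ⊆ ℂ` are compact with `∂K ⊆ H ⊆ K` and `H` is countable, then
`H = K`; in particular `K` is countable. -/
theorem eq_of_countable_between
    (K H : Set ℂ) (hK : IsCompact K) (hH : IsCompact H)
    (h1 : frontier K ⊆ H) (h2 : H ⊆ K) (hcount : H.Countable) :
    H = K ∧ K.Countable := by
  have hrank : 1 < Module.rank ℝ ℂ := by
    rw [Complex.rank_real_complex]; norm_num
  have hconn : IsConnected Hᶜ := hcount.isConnected_compl_of_one_lt_rank hrank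
  have hKc : IsClosed K := hK.isClosed
  have hsub : K ⊆ H := by
    intro x hx
    by_contra hxH
    -- x is in the interior of K
    have hxint : x ∈ interior K := by
      have : x ∈ closure K := subset_closure hx
      rw [closure_eq_interior_union_frontier] at this
      rcases this with h | h
      · exact h
      · exact absurd (h1 h) hxH
    -- pick y outside K
    obtain ⟨r, hr⟩ := hK.isBounded.subset_closedBall 0
    have hy : (r + 1 : ℂ) * (‖(1:ℂ)‖ : ℂ) + (r+1) ∉ K := by
      intro hmem
      have := hr hmem
      simp [Metric.mem_closedBall, Complex.dist_eq] at this
      have h0 : (0:ℝ) ≤ r := le_trans (by positivity) this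
      have : ‖((r+1 : ℂ) * 1 + (r+1))‖ ≤ r := by
        simpa [Complex.dist_eq] using hr hmem
      have habs : ‖((r+1 : ℂ) * 1 + (r+1))‖ = 2*(r+1) := by
        have : ((r+1 : ℂ) * 1 + (r+1)) = ((2*(r+1) : ℝ) : ℂ) := by push_cast; ring
        rw [this, Complex.norm_real, Real.norm_eq_abs]
        rw [abs_of_nonneg (by linarith)]
      linarith [habs ▸ this]
    set y : ℂ := (r + 1 : ℂ) * (‖(1:ℂ)‖ : ℂ) + (r+1) with hy_def
    have hyH : y ∉ H := fun h => hy (h2 h)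
    -- connectedness contradiction
    have hpc := hconn.isPreconnected
    have hcover : Hᶜ ⊆ interior K ∪ (Kᶜ) := by
      intro z hz
      by_cases hzK : z ∈ K
      · left
        have : z ∈ closure K := subset_closure hzK
        rw [closure_eq_interior_union_frontier] at this
        rcases this with h | h
        · exact h
        · exact absurd (h1 h) hz
      · right; exact hzK
    have := hpc (interior K) Kᶜ isOpen_interior hKc.isOpen_compl hcover
      ⟨x, hxH, hxint⟩ ⟨y, hyH, hy⟩
    obtain ⟨z, _, hz1, hz2⟩ := this
    exact hz2 (interior_subset hz1)
  have hEq : H = K := Set.Subset.antisymm h2 hsub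
  exact ⟨hEq, hEq ▸ hcount⟩
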